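/- Let Ω ⊂ ℝ be an open bounded interval and α ∈ (0,1), p ∈ [1,∞). Then for every α-Hölder continuous φ : Ω̄ → ℝ, one has ‖φ‖_{L^∞(Ω)} ≤ ((pα+1)/(pα)^{pα/(pα+1)}) · [φ]_α^{1/(pα+1)} · ‖φ‖_{L^p(Ω)}^{pα/(pα+1)} + ((pα+1)/(pα·|Ω|^{1/p})) · ‖φ‖_{L^p(Ω)}, where [φ]_α denotes the α-Hölder seminorm of φ on Ω̄. -/

import Mathlib

open Set MeasureTheory Filter Topology


private lemma keylem (a b : ℝ) (hab : a < b) (α p : ℝ) (hα0 : 0 < α) (hp : 1 ≤ p)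
    (φ : ℝ → ℝ) (hφ : ContinuousOn φ (Set.Icc a b)) (M : ℝ) (hM0 : 0 ≤ M)
    (hM : ∀ u ∈ Set.Icc a b, ∀ v ∈ Set.Icc a b, |φ u - φ v| ≤ M * |u - v| ^ α)
    (x : ℝ) (hx : x ∈ Set.Icc a b) (r : ℝ) (hr0 : 0 < r) (hr : r ≤ b - a) :
    |φ x| ≤ (∫ y in a..b, |φ y| ^ p) ^ (1/p) * r ^ (-(1/p)) + M * r ^ α := by
  have hp0 : 0 < p := lt_of_lt_of_le one_pos hp
  set c := min x (b - r) with hc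
  have hac : a ≤ c := le_min hx.1 (by linarith)
  have hcx : c ≤ x := min_le_left _ _
  have hcrb : c + r ≤ b := by have := min_le_right x (b - r); linarith
  have hxc : x ≤ c + r := by
    rcases le_or_gt x (b - r) with h | h
    · rw [hc, min_eq_left h]; linarith
    · rw [hc, min_eq_right h.le]; linarith [hx.2]
  have hsub : Icc c (c + r) ⊆ Icc a b := Icc_subset_Icc hac hcrb
  have hccr : c ≤ c + r := by linarith
  obtain ⟨y, hyI, hymin⟩ := isCompact_Icc.exists_isMinOn (nonempty_Icc.mpr hccr)
    ((hφ.mono hsub).abs)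
  have hgcont : ContinuousOn (fun z => |φ z| ^ p) (Icc a b) :=
    (hφ.abs).rpow_const (fun z _ => Or.inr (by linarith))
  have hint_ab : IntervalIntegrable (fun z => |φ z| ^ p) volume a b :=
    (by rw [uIcc_of_le hab.le]; exact hgcont : ContinuousOn _ (uIcc a b)).intervalIntegrable
  have hint_I : IntervalIntegrable (fun z => |φ z| ^ p) volume c (c + r) :=
    (by rw [uIcc_of_le hccr]; exact hgcont.mono hsub :
      ContinuousOn (fun z => |φ z| ^ p) (uIcc c (c + r))).intervalIntegrable
  have h1 : |φ y| ^ p * r ≤ ∫ z in c..(c + r), |φ z| ^ p := by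
    have hmono := intervalIntegral.integral_mono_on hccr intervalIntegrable_const hint_I
      (fun z hz => Real.rpow_le_rpow (abs_nonneg _) (hymin hz) hp0.le)
    simpa [mul_comm] using hmono
  have h2 : (∫ z in c..(c + r), |φ z| ^ p) ≤ ∫ z in a..b, |φ z| ^ p :=
    intervalIntegral.integral_mono_interval hac hccr hcrb
      (Filter.Eventually.of_forall (fun z => by positivity)) hint_ab
  have hX0 : 0 ≤ ∫ z in a..b, |φ z| ^ p :=
    intervalIntegral.integral_nonneg hab.le (fun z _ => by positivity)
  have hXr : |φ y| ^ p ≤ (∫ z in a..b, |φ z| ^ p) / r := by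
    rw [le_div_iff₀ hr0]; linarith
  have hy_le : |φ y| ≤ (∫ z in a..b, |φ z| ^ p) ^ (1/p) * r ^ (-(1/p)) := by
    have h3 : (|φ y| ^ p) ^ (1/p) ≤ ((∫ z in a..b, |φ z| ^ p) / r) ^ (1/p) :=
      Real.rpow_le_rpow (by positivity) hXr (by positivity)
    have h4 : (|φ y| ^ p) ^ (1/p) = |φ y| := by
      rw [← Real.rpow_mul (abs_nonneg _), mul_one_div, div_self hp0.ne', Real.rpow_one]
    have h5 : ((∫ z in a..b, |φ z| ^ p) / r) ^ (1/p)
        = (∫ z in a..b, |φ z| ^ p) ^ (1/p) * r ^ (-(1/p)) := by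
      rw [Real.div_rpow hX0 hr0.le, Real.rpow_neg hr0.le, div_eq_mul_inv]
    rw [h4, h5] at h3; exact h3
  have hyab : y ∈ Icc a b := hsub hyI
  have hxI : x ∈ Icc c (c + r) := ⟨hcx, hxc⟩
  have hxy : |x - y| ≤ r := by
    rw [abs_sub_le_iff]
    exact ⟨by linarith [hyI.1, hxI.2], by linarith [hyI.2, hxI.1]⟩
  have h5 : |x - y| ^ α ≤ r ^ α := Real.rpow_le_rpow (abs_nonneg _) hxy hα0.le
  have h6 := hM x hx y hyab
  have h7 := abs_sub_abs_le_abs_sub (φ x) (φ y)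
  have h8 : M * |x - y| ^ α ≤ M * r ^ α := mul_le_mul_of_nonneg_left h5 hM0
  linarith

theorem stmt7 (a b : ℝ) (hab : a < b) (α p : ℝ) (hα0 : 0 < α) (hα1 : α < 1) (hp : 1 ≤ p)
    (φ : ℝ → ℝ) (hφ : ContinuousOn φ (Set.Icc a b))
    (hbdd : BddAbove {r : ℝ | ∃ x ∈ Set.Icc a b, ∃ y ∈ Set.Icc a b,
        x ≠ y ∧ r = |φ x - φ y| / |x - y| ^ α}) :
    ∀ x ∈ Set.Icc a b,
      |φ x| ≤ (p * α + 1) / (p * α) ^ (p * α / (p * α + 1))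
          * (sSup {r : ℝ | ∃ x ∈ Set.Icc a b, ∃ y ∈ Set.Icc a b,
              x ≠ y ∧ r = |φ x - φ y| / |x - y| ^ α}) ^ (1 / (p * α + 1))
          * ((∫ y in a..b, |φ y| ^ p) ^ (1 / p)) ^ (p * α / (p * α + 1))
        + (p * α + 1) / (p * α * (b - a) ^ (1 / p)) * (∫ y in a..b, |φ y| ^ p) ^ (1 / p) := by
  intro x hx
  have hp0 : 0 < p := lt_of_lt_of_le one_pos hp
  set S := {r : ℝ | ∃ x ∈ Set.Icc a b, ∃ y ∈ Set.Icc a b,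
      x ≠ y ∧ r = |φ x - φ y| / |x - y| ^ α} with hS
  set M := sSup S with hMdef
  have hmemS : |φ a - φ b| / |a - b| ^ α ∈ S :=
    ⟨a, ⟨le_rfl, hab.le⟩, b, ⟨hab.le, le_rfl⟩, hab.ne, rfl⟩
  have hM0 : 0 ≤ M := le_trans (by positivity) (le_csSup hbdd hmemS)
  have hM : ∀ u ∈ Icc a b, ∀ v ∈ Icc a b, |φ u - φ v| ≤ M * |u - v| ^ α := by
    intro u hu v hv
    by_cases huv : u = v
    · subst huv; simp [Real.zero_rpow hα0.ne']
    · have hpos : 0 < |u - v| ^ α :=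
        Real.rpow_pos_of_pos (abs_pos.mpr (sub_ne_zero.mpr huv)) α
      have hmem : |φ u - φ v| / |u - v| ^ α ∈ S := ⟨u, hu, v, hv, huv, rfl⟩
      have h := le_csSup hbdd hmem
      rw [div_le_iff₀ hpos] at h
      linarith
  set k := p * α with hk
  have hk0 : 0 < k := mul_pos hp0 hα0
  have hk1 : (0:ℝ) < k + 1 := by linarith
  set X := ∫ y in a..b, |φ y| ^ p with hX
  have hX0 : 0 ≤ X := intervalIntegral.integral_nonneg hab.le (fun z _ => by positivity)
  set L := X ^ (1/p) with hL
  have hL0 : 0 ≤ L := Real.rpow_nonneg hX0 _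
  have hba : (0:ℝ) < b - a := by linarith
  have key : ∀ r, 0 < r → r ≤ b - a → |φ x| ≤ L * r ^ (-(1/p)) + M * r ^ α :=
    fun r h1 h2 => keylem a b hab α p hα0 hp φ hφ M hM0 hM x hx r h1 h2
  set u := 1 / (k + 1) with hu
  set s := k / (k + 1) with hs
  have hsu : s = 1 - u := by rw [hs, hu]; field_simp; ring
  have hus : u = 1 - s := by rw [hsu]; ring
  have hs0 : 0 < s := by positivity
  have hu0 : 0 < u := by positivity
  by_cases hXz : X = 0
  · have hLz : L = 0 := by
      rw [hL, hXz, Real.zero_rpow (by positivity : (1:ℝ)/p ≠ 0)]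
    have hb1 : ∀ r ∈ Ioc (0:ℝ) (b - a), |φ x| ≤ M * r ^ α := by
      intro r hr
      have h := key r hr.1 hr.2
      rw [hLz] at h; simpa using h
    have hlim : Tendsto (fun r : ℝ => M * r ^ α) (𝓝[>] (0:ℝ)) (𝓝 0) := by
      have h0 : ContinuousAt (fun r : ℝ => r ^ α) 0 :=
        Real.continuousAt_rpow_const 0 α (Or.inr hα0.le)
      have h1 : Tendsto (fun r : ℝ => r ^ α) (𝓝[>] (0:ℝ)) (𝓝 ((0:ℝ) ^ α)) := (h0.tendsto).mono_left nhdsWithin_le_nhds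
      rw [Real.zero_rpow hα0.ne'] at h1
      simpa using h1.const_mul M
    have hev : ∀ᶠ r in 𝓝[>] (0:ℝ), |φ x| ≤ M * r ^ α := by
      filter_upwards [Ioc_mem_nhdsGT_of_mem ⟨le_rfl, hba⟩] with r hr using hb1 r hr
    have hφ0 : |φ x| ≤ 0 := ge_of_tendsto hlim hev
    rw [hLz, Real.zero_rpow hs0.ne']
    simpa using hφ0
  · have hXpos : 0 < X := lt_of_le_of_ne hX0 (Ne.symm hXz)
    have hLpos : 0 < L := Real.rpow_pos_of_pos hXpos _
    have hbp : 0 < (b - a) ^ (1/p) := Real.rpow_pos_of_pos hba _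
    by_cases hcase : k * M * (b - a) ^ ((k + 1)/p) ≤ L
    · -- use r = b - a
      have h1 := key (b - a) hba le_rfl
      have hsplit : (b - a) ^ ((k + 1)/p) = (b - a) ^ α * (b - a) ^ (1/p) := by
        rw [← Real.rpow_add hba]
        congr 1
        rw [hk]; field_simp
      rw [hsplit] at hcase
      have hMba : M * (b - a) ^ α ≤ L / (k * (b - a) ^ (1/p)) := by
        rw [le_div_iff₀ (by positivity)]
        nlinarith
      have hterm1 : 0 ≤ (k + 1) / k ^ s * M ^ u * L ^ s := by positivity
      have heq2 : (k + 1) / (k * (b - a) ^ (1/p)) * L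
          = L * (b - a) ^ (-(1/p)) + L / (k * (b - a) ^ (1/p)) := by
        rw [Real.rpow_neg hba.le]
        field_simp
      rw [heq2]
      linarith
    · push_neg at hcase
      have hMpos : 0 < M := by
        rcases lt_or_eq_of_le hM0 with h | h
        · exact h
        · exfalso; rw [← h] at hcase; simp at hcase; linarith
      have hkM : 0 < k * M := by positivity
      set t := L / (k * M) with ht
      have htpos : 0 < t := div_pos hLpos hkM
      set r := t ^ (p / (k + 1)) with hrdef
      have hrpos : 0 < r := Real.rpow_pos_of_pos htpos _
      have hrle : r ≤ b - a := by
        have h1 : t < (b - a) ^ ((k + 1)/p) := by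
          rw [ht, div_lt_iff₀ hkM]; nlinarith
        calc r ≤ ((b - a) ^ ((k + 1)/p)) ^ (p/(k + 1)) :=
              Real.rpow_le_rpow htpos.le h1.le (by positivity)
          _ = b - a := by
              rw [← Real.rpow_mul hba.le]
              rw [show (k + 1)/p * (p/(k + 1)) = 1 by field_simp, Real.rpow_one]
      have h1 := key r hrpos hrle
      have e1 : r ^ (-(1/p)) = t ^ (-u) := by
        rw [hrdef, ← Real.rpow_mul htpos.le]
        congr 1
        rw [hu]; field_simp
      have e2 : r ^ α = t ^ s := by
        rw [hrdef, ← Real.rpow_mul htpos.le]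
        congr 1
        rw [hs, hk]; field_simp
      have hLu : (0:ℝ) < L ^ u := Real.rpow_pos_of_pos hLpos u
      have hku : (0:ℝ) < k ^ u := Real.rpow_pos_of_pos hk0 u
      have hMu : (0:ℝ) < M ^ u := Real.rpow_pos_of_pos hMpos u
      have hsL : L ^ s = L / L ^ u := by rw [hsu, Real.rpow_sub hLpos, Real.rpow_one]
      have hsk : k ^ s = k / k ^ u := by rw [hsu, Real.rpow_sub hk0, Real.rpow_one]
      have hsM : M ^ s = M / M ^ u := by rw [hsu, Real.rpow_sub hMpos, Real.rpow_one]
      have heq : L * r ^ (-(1/p)) + M * r ^ α = (k + 1) / k ^ s * M ^ u * L ^ s := by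
        rw [e1, e2, Real.rpow_neg htpos.le, ht,
          Real.div_rpow hL0 hkM.le, Real.div_rpow hL0 hkM.le,
          Real.mul_rpow hk0.le hM0, Real.mul_rpow hk0.le hM0,
          hsL, hsk, hsM]
        field_simp
      have hterm2 : 0 ≤ (k + 1) / (k * (b - a) ^ (1/p)) * L := by positivity
      linarith [heq ▸ h1]
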